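/- Let h > 0, let (a_ij), (b_ij) be symmetric N×N real matrices with zero diagonal, and let χ ∈ 𝒜. Define the comparison functions ψ_i = Σ_{j≠i} K^h_ij * χ_j for i = 1,…,N. Suppose χ' ∈ 𝒜 satisfies: for almost every x and every i, if χ'_i(x) = 1 then ψ_i(x) ≤ ψ_j(x) for all j = 1,…,N. Then χ' minimizes the functional u ↦ (1/(2h))·d_h(u,χ)² + E_h(u) among all u ∈ ℳ, i.e. (1/(2h))·d_h(χ',χ)² + E_h(χ') ≤ (1/(2h))·d_h(u,χ)² + E_h(u) for every u ∈ ℳ. -/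

import Mathlib

open Real MeasureTheory Filter Topology

/-- The `d`-dimensional heat kernel `G_t(z) = (4πt)^{-d/2} exp(-|z|²/(4t))`. -/
noncomputable def heatK (d : ℕ) (t : ℝ) (z : Fin d → ℝ) : ℝ :=
  (4 * Real.pi * t) ^ (-(d : ℝ) / 2) * Real.exp (-(∑ i, z i ^ 2) / (4 * t))

/-- The rescaled kernel `K^h_ij(z) = h^{-d/2}·(a_ij G_γ + b_ij G_β)(z/√h)`. -/
noncomputable def Khij (d : ℕ) (γ β aij bij h : ℝ) (z : Fin d → ℝ) : ℝ :=
  h ^ (-(d : ℝ) / 2) *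
    (aij * heatK d γ ((Real.sqrt h)⁻¹ • z) + bij * heatK d β ((Real.sqrt h)⁻¹ • z))

/-- Convolution `(K*u)(x) = ∫ K(z) u(x−z) dz`. -/
noncomputable def conv {d : ℕ} (K : (Fin d → ℝ) → ℝ) (u : (Fin d → ℝ) → ℝ)
    (x : Fin d → ℝ) : ℝ :=
  ∫ z, K z * u (x - z)

/-- The unit box `[0,1)^d`. -/
def unitBox (d : ℕ) : Set (Fin d → ℝ) := Set.univ.pi fun _ => Set.Ico (0 : ℝ) 1

/-- `ℤ^d`-periodicity. -/
def ZPeriodic {d : ℕ} {α : Type*} (u : (Fin d → ℝ) → α) : Prop :=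
  ∀ (x : Fin d → ℝ) (k : Fin d → ℤ), u (x + fun i => (k i : ℝ)) = u x

/-- Membership in `ℳ`: measurable `ℤ^d`-periodic functions with values in `[0,1]^N`
summing to `1` a.e. -/
def memM {d N : ℕ} (u : (Fin d → ℝ) → Fin N → ℝ) : Prop :=
  Measurable u ∧ ZPeriodic u ∧ (∀ x i, u x i ∈ Set.Icc (0 : ℝ) 1) ∧
    ∀ᵐ x ∂(volume : Measure (Fin d → ℝ)), ∑ i, u x i = 1

/-- Membership in `𝒜`: elements of `ℳ` with values in `{0,1}^N`. -/
def memA {d N : ℕ} (u : (Fin d → ℝ) → Fin N → ℝ) : Prop :=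
  memM u ∧ ∀ x i, u x i = 0 ∨ u x i = 1

/-- The approximate energy `E_h(u) = h^{-1/2} Σ_{i,j} ∫_{[0,1)^d} u_i K^h_ij * u_j dx`. -/
noncomputable def Eh {d N : ℕ} (γ β : ℝ) (a b : Fin N → Fin N → ℝ) (h : ℝ)
    (u : (Fin d → ℝ) → Fin N → ℝ) : ℝ :=
  (Real.sqrt h)⁻¹ * ∑ i, ∑ j, ∫ x in unitBox d,
    u x i * conv (Khij d γ β (a i j) (b i j) h) (fun y => u y j) x

/-- The squared distance
`d_h(u,v)² = -2√h Σ_{i,j} ∫_{[0,1)^d} (u_i-v_i) K^h_ij * (u_j-v_j) dx`. -/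
noncomputable def dsq {d N : ℕ} (γ β : ℝ) (a b : Fin N → Fin N → ℝ) (h : ℝ)
    (u v : (Fin d → ℝ) → Fin N → ℝ) : ℝ :=
  -2 * Real.sqrt h * ∑ i, ∑ j, ∫ x in unitBox d,
    (u x i - v x i) * conv (Khij d γ β (a i j) (b i j) h) (fun y => u y j - v y j) x

section Aux
open Pointwise

lemma measurableSet_unitBox (d : ℕ) : MeasurableSet (unitBox d) :=
  MeasurableSet.univ_pi fun _ => measurableSet_Ico

lemma volume_unitBox (d : ℕ) : volume (unitBox d) = 1 := by
  rw [unitBox, volume_pi_pi]; simp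

instance boxFiniteMeasure (d : ℕ) : IsFiniteMeasure (volume.restrict (unitBox d)) :=
  ⟨by rw [Measure.restrict_apply_univ, volume_unitBox]; exact ENNReal.one_lt_top⟩

lemma integrable_gauss {d : ℕ} {c : ℝ} (hc : 0 < c) :
    Integrable (fun z : Fin d → ℝ => Real.exp (-c * ∑ i, z i ^ 2)) := by
  have : (fun z : Fin d → ℝ => Real.exp (-c * ∑ i, z i ^ 2))
      = fun z => ∏ i, Real.exp (-c * z i ^ 2) := by
    funext z; rw [← Real.exp_sum, Finset.mul_sum]
  rw [this]
  exact Integrable.fintype_prod (fun i => integrable_exp_neg_mul_sq hc)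

lemma heatK_smul_eq (d : ℕ) (t s : ℝ) (z : Fin d → ℝ) :
    heatK d t (s • z)
      = (4 * Real.pi * t) ^ (-(d:ℝ)/2) * Real.exp (-(s^2/(4*t)) * ∑ i, z i ^ 2) := by
  unfold heatK
  congr 2
  simp only [Pi.smul_apply, smul_eq_mul, mul_pow, ← Finset.mul_sum]
  ring

lemma Khij_integrable {d : ℕ} {γ β h : ℝ} (hγ : 0 < γ) (hβ : 0 < β) (hh : 0 < h)
    (aij bij : ℝ) : Integrable (Khij d γ β aij bij h) := by
  have hs : 0 < Real.sqrt h := Real.sqrt_pos.2 hh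
  have h1 : (0:ℝ) < ((Real.sqrt h)⁻¹)^2/(4*γ) := by positivity
  have h2 : (0:ℝ) < ((Real.sqrt h)⁻¹)^2/(4*β) := by positivity
  have key : Khij d γ β aij bij h = fun z =>
      (h ^ (-(d:ℝ)/2) * aij * (4*Real.pi*γ) ^ (-(d:ℝ)/2))
        * Real.exp (-(((Real.sqrt h)⁻¹)^2/(4*γ)) * ∑ i, z i ^ 2)
      + (h ^ (-(d:ℝ)/2) * bij * (4*Real.pi*β) ^ (-(d:ℝ)/2))
        * Real.exp (-(((Real.sqrt h)⁻¹)^2/(4*β)) * ∑ i, z i ^ 2) := by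
    funext z; rw [Khij, heatK_smul_eq, heatK_smul_eq]; ring
  rw [key]
  exact ((integrable_gauss h1).const_mul _).add ((integrable_gauss h2).const_mul _)

lemma Khij_measurable {d : ℕ} (γ β aij bij h : ℝ) : Measurable (Khij d γ β aij bij h) := by
  unfold Khij heatK
  fun_prop

lemma Khij_even {d : ℕ} (γ β aij bij h : ℝ) (z : Fin d → ℝ) :
    Khij d γ β aij bij h (-z) = Khij d γ β aij bij h z := by
  have hs : ∀ (w : Fin d → ℝ), ∑ i, (-w) i ^ 2 = ∑ i, w i ^ 2 := by
    intro w; simp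
  simp only [Khij, heatK, smul_neg, hs]

variable {d : ℕ} {K u v : (Fin d → ℝ) → ℝ}

lemma conv_integrand_integrable (hK : Integrable K) (hu : Measurable u) {C : ℝ}
    (hub : ∀ y, |u y| ≤ C) (x : Fin d → ℝ) :
    Integrable fun z => K z * u (x - z) := by
  have := hK.bdd_mul (c := C)
    ((hu.comp (measurable_const.sub measurable_id)).aestronglyMeasurable)
    (ae_of_all _ fun z => by simpa [Real.norm_eq_abs] using hub (x - z))
  simpa [mul_comm] using this

lemma conv_measurable (hK : Measurable K) (hu : Measurable u) : Measurable (conv K u) := by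
  have : StronglyMeasurable fun p : (Fin d → ℝ) × (Fin d → ℝ) => K p.2 * u (p.1 - p.2) :=
    ((hK.comp measurable_snd).mul (hu.comp (measurable_fst.sub measurable_snd))).stronglyMeasurable
  exact this.integral_prod_right'.measurable

lemma conv_bound (hK : Integrable K) (hu : Measurable u) {C : ℝ}
    (hub : ∀ y, |u y| ≤ C) (x : Fin d → ℝ) :
    |conv K u x| ≤ C * ∫ z, |K z| := by
  rw [conv]
  calc |∫ z, K z * u (x - z)| ≤ ∫ z, |K z| * |u (x - z)| := by
        simpa [Real.norm_eq_abs] using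
          norm_integral_le_integral_norm (fun z => K z * u (x - z))
    _ ≤ ∫ z, C * |K z| := by
        refine integral_mono ?_ (hK.abs.const_mul C) ?_
        · simpa [abs_mul] using (conv_integrand_integrable hK hu hub x).abs
        · intro z
          simp only [mul_comm C _]
          exact mul_le_mul_of_nonneg_left (hub _) (abs_nonneg _)
    _ = C * ∫ z, |K z| := MeasureTheory.integral_const_mul _ _

lemma conv_sub (hK : Integrable K) (hu : Measurable u) (hv : Measurable v) {C : ℝ}
    (hub : ∀ y, |u y| ≤ C) (hvb : ∀ y, |v y| ≤ C) (x : Fin d → ℝ) :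
    conv K (fun y => u y - v y) x = conv K u x - conv K v x := by
  rw [conv, conv, conv, ← integral_sub (conv_integrand_integrable hK hu hub x)
    (conv_integrand_integrable hK hv hvb x)]
  congr 1; funext z; ring

abbrev latt (d : ℕ) : Submodule ℤ (Fin d → ℝ) :=
  Submodule.span ℤ (Set.range (Pi.basisFun ℝ (Fin d)))

lemma unitBox_eq_fd (d : ℕ) :
    unitBox d = ZSpan.fundamentalDomain (Pi.basisFun ℝ (Fin d)) := by
  ext x
  simp [unitBox, ZSpan.fundamentalDomain, Set.mem_pi]

lemma isFD_box (d : ℕ) :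
    IsAddFundamentalDomain (latt d) (unitBox d) volume := by
  rw [unitBox_eq_fd]
  exact ZSpan.isAddFundamentalDomain _ _

instance lattVAddComm (d : ℕ) : VAddCommClass (Fin d → ℝ) (latt d) (Fin d → ℝ) :=
  ⟨fun a g x => by
    show a + ((g : Fin d → ℝ) + x) = (g : Fin d → ℝ) + (a + x)
    ring⟩

instance lattMeasurableVAdd (d : ℕ) : MeasurableVAdd (latt d) (Fin d → ℝ) :=
  { measurable_const_vadd := fun c => by
      show Measurable fun x : Fin d → ℝ => (c : Fin d → ℝ) + x
      exact measurable_const_add _,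
    measurable_vadd_const := fun x => by
      show Measurable fun c : latt d => (c : Fin d → ℝ) + x
      exact measurable_subtype_coe.add_const x }

instance lattVAddInvariant (d : ℕ) :
    VAddInvariantMeasure (latt d) (Fin d → ℝ) volume :=
  ⟨fun c s hs => by
    show volume ((fun x => (c : Fin d → ℝ) + x) ⁻¹' s) = volume s
    exact measure_preimage_add volume _ s⟩

lemma isFD_box_vadd (d : ℕ) (c : Fin d → ℝ) :
    IsAddFundamentalDomain (latt d) (c +ᵥ unitBox d) volume :=
  (isFD_box d).vadd_of_comm c

lemma periodic_vadd_invariant {d : ℕ} {E : Type*} {F : (Fin d → ℝ) → E} (hF : ZPeriodic F) :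
    ∀ (g : latt d) (x : Fin d → ℝ), F (g +ᵥ x) = F x := by
  intro g x
  have hg := (Pi.basisFun ℝ (Fin d)).mem_span_iff_repr_mem ℤ (g : Fin d → ℝ) |>.1 g.2
  simp only [Pi.basisFun_repr, Set.mem_range] at hg
  choose k hk using hg
  have hgk : (g : Fin d → ℝ) = fun i => (k i : ℝ) := by
    funext i; rw [← hk i]; simp
  have : (g +ᵥ x) = x + fun i => (k i : ℝ) := by
    show (g : Fin d → ℝ) + x = _
    rw [hgk]; ext i; simp [add_comm]
  rw [this, hF]

lemma setIntegral_box_translate {d : ℕ} {F : (Fin d → ℝ) → ℝ} (hF : ZPeriodic F)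
    (c : Fin d → ℝ) :
    ∫ x in (c +ᵥ unitBox d), F x = ∫ x in unitBox d, F x :=
  (isFD_box_vadd d c).setIntegral_eq (isFD_box d) (periodic_vadd_invariant hF)

lemma box_shift {d : ℕ} {f g : (Fin d → ℝ) → ℝ} (hf : ZPeriodic f) (hg : ZPeriodic g)
    (z : Fin d → ℝ) :
    ∫ x in unitBox d, f x * g (x - z) = ∫ x in unitBox d, f (x + z) * g x := by
  have h1 := (measurePreserving_add_right volume z).setIntegral_preimage_emb
      (MeasurableEquiv.addRight z).measurableEmbedding
      (fun y => f y * g (y - z)) (unitBox d)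
  have h2 : ((· + z) ⁻¹' unitBox d) = (-z) +ᵥ unitBox d := by
    ext x
    simp only [Set.mem_preimage, Set.mem_vadd_set_iff_neg_vadd_mem, vadd_eq_add, neg_neg]
    rw [add_comm]
  have h3 : ZPeriodic (fun x => f (x + z) * g x) := by
    intro x k
    have : (x + fun i => (k i : ℝ)) + z = (x + z) + fun i => (k i : ℝ) := by
      ext i; simp; ring
    simp only [this, hf (x + z) k, hg x k]
  calc ∫ x in unitBox d, f x * g (x - z)
      = ∫ x in ((· + z) ⁻¹' unitBox d), f (x + z) * g (x + z - z) := h1.symm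
    _ = ∫ x in ((-z) +ᵥ unitBox d), f (x + z) * g x := by rw [h2]; simp only [add_sub_cancel_right]
    _ = ∫ x in unitBox d, f (x + z) * g x := setIntegral_box_translate h3 (-z)

end Aux

section Aux2
open Pointwise

variable {d : ℕ} {K f g : (Fin d → ℝ) → ℝ}

lemma prod_integrable_left (hKi : Integrable K) (hKm : Measurable K)
    (hf : Measurable f) (hfb : ∀ y, |f y| ≤ 1)
    (hg : Measurable g) (hgb : ∀ y, |g y| ≤ 1) :
    Integrable (Function.uncurry fun x z => f x * (K z * g (x - z)))
      ((volume.restrict (unitBox d)).prod volume) := by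
  have hbound : Integrable (fun p : (Fin d → ℝ) × (Fin d → ℝ) => (1:ℝ) * |K p.2|)
      ((volume.restrict (unitBox d)).prod volume) :=
    (integrable_const 1).mul_prod hKi.abs
  refine hbound.mono' ?_ ?_
  · exact ((hf.comp measurable_fst).mul ((hKm.comp measurable_snd).mul
      (hg.comp (measurable_fst.sub measurable_snd)))).aestronglyMeasurable
  · refine ae_of_all _ fun p => ?_
    rw [Real.norm_eq_abs, Function.uncurry, one_mul, abs_mul, abs_mul]
    calc |f p.1| * (|K p.2| * |g (p.1 - p.2)|) ≤ 1 * (|K p.2| * 1) := by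
          refine mul_le_mul (hfb _) ?_ (by positivity) zero_le_one
          exact mul_le_mul_of_nonneg_left (hgb _) (abs_nonneg _)
      _ = |K p.2| := by ring

lemma prod_integrable_right (hKi : Integrable K) (hKm : Measurable K)
    (hf : Measurable f) (hfb : ∀ y, |f y| ≤ 1)
    (hg : Measurable g) (hgb : ∀ y, |g y| ≤ 1) :
    Integrable (Function.uncurry fun z x => K z * (f (x + z) * g x))
      (volume.prod (volume.restrict (unitBox d))) := by
  have hbound : Integrable (fun p : (Fin d → ℝ) × (Fin d → ℝ) => |K p.1| * (1:ℝ))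
      (volume.prod (volume.restrict (unitBox d))) :=
    hKi.abs.mul_prod (integrable_const 1)
  refine hbound.mono' ?_ ?_
  · exact ((hKm.comp measurable_fst).mul
      ((hf.comp (measurable_snd.add measurable_fst)).mul
        (hg.comp measurable_snd))).aestronglyMeasurable
  · refine ae_of_all _ fun p => ?_
    rw [Real.norm_eq_abs, Function.uncurry, mul_one, abs_mul, abs_mul]
    calc |K p.1| * (|f (p.2 + p.1)| * |g p.2|) ≤ |K p.1| * (1 * 1) := by
          refine mul_le_mul_of_nonneg_left ?_ (abs_nonneg _)
          exact mul_le_mul (hfb _) (hgb _) (abs_nonneg _) zero_le_one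
      _ = |K p.1| := by ring

lemma conv_flip (hKi : Integrable K) (hKe : ∀ z, K (-z) = K z) (f : (Fin d → ℝ) → ℝ)
    (x : Fin d → ℝ) :
    ∫ z, K z * f (x + z) = conv K f x := by
  rw [conv, ← integral_neg_eq_self (fun z => K z * f (x - z))]
  simp only [hKe, sub_neg_eq_add]

lemma conv_symm (hKi : Integrable K) (hKm : Measurable K) (hKe : ∀ z, K (-z) = K z)
    (hf : Measurable f) (hfp : ZPeriodic f) (hfb : ∀ y, |f y| ≤ 1)
    (hg : Measurable g) (hgp : ZPeriodic g) (hgb : ∀ y, |g y| ≤ 1) :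
    ∫ x in unitBox d, f x * conv K g x = ∫ x in unitBox d, g x * conv K f x := by
  calc ∫ x in unitBox d, f x * conv K g x
      = ∫ x in unitBox d, ∫ z, f x * (K z * g (x - z)) := by
        refine integral_congr_ae (ae_of_all _ fun x => ?_)
        show f x * conv K g x = ∫ z, f x * (K z * g (x - z))
        rw [conv, MeasureTheory.integral_const_mul]
    _ = ∫ z, ∫ x in unitBox d, f x * (K z * g (x - z)) :=
        integral_integral_swap (prod_integrable_left hKi hKm hf hfb hg hgb)
    _ = ∫ z, ∫ x in unitBox d, K z * (f x * g (x - z)) := by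
        congr 1; funext z; congr 1; funext x; ring
    _ = ∫ z, K z * ∫ x in unitBox d, f x * g (x - z) := by
        congr 1; funext z; exact MeasureTheory.integral_const_mul _ _
    _ = ∫ z, K z * ∫ x in unitBox d, f (x + z) * g x := by
        congr 1; funext z; rw [box_shift hfp hgp]
    _ = ∫ z, ∫ x in unitBox d, K z * (f (x + z) * g x) := by
        congr 1; funext z; exact (MeasureTheory.integral_const_mul _ _).symm
    _ = ∫ x in unitBox d, ∫ z, K z * (f (x + z) * g x) :=
        integral_integral_swap (prod_integrable_right hKi hKm hf hfb hg hgb)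
    _ = ∫ x in unitBox d, g x * ∫ z, K z * f (x + z) := by
        refine integral_congr_ae (ae_of_all _ fun x => ?_)
        show (∫ z, K z * (f (x + z) * g x)) = g x * ∫ z, K z * f (x + z)
        rw [← MeasureTheory.integral_const_mul]
        congr 1; funext z; ring
    _ = ∫ x in unitBox d, g x * conv K f x := by
        refine integral_congr_ae (ae_of_all _ fun x => ?_)
        show g x * ∫ z, K z * f (x + z) = g x * conv K f x
        rw [conv_flip hKi hKe]

lemma integrableOn_mul_conv (hKi : Integrable K) (hKm : Measurable K)
    (hf : Measurable f) (hfb : ∀ y, |f y| ≤ 1)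
    (hg : Measurable g) (hgb : ∀ y, |g y| ≤ 1) :
    IntegrableOn (fun x => f x * conv K g x) (unitBox d) := by
  refine Integrable.mono' (g := fun _ => 1 * ∫ z, |K z|) (integrable_const _) ?_ ?_
  · exact (hf.mul (conv_measurable hKm hg)).aestronglyMeasurable
  · refine ae_of_all _ fun x => ?_
    rw [Real.norm_eq_abs, abs_mul]
    have h2 := conv_bound hKi hg hgb x
    rw [one_mul] at h2
    exact mul_le_mul (hfb x) h2 (abs_nonneg _) zero_le_one

end Aux2

section Main
open Pointwise

/-- Auxiliary bilinear functional. -/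
noncomputable def Jfun {d N : ℕ} (γ β : ℝ) (a b : Fin N → Fin N → ℝ) (h : ℝ)
    (v w : (Fin d → ℝ) → Fin N → ℝ) : ℝ :=
  ∑ i, ∑ j, ∫ x in unitBox d,
    v x i * conv (Khij d γ β (a i j) (b i j) h) (fun y => w y j) x

lemma expand4 {d : ℕ} {K p q P Q : (Fin d → ℝ) → ℝ}
    (hKi : Integrable K) (hKm : Measurable K)
    (hp : Measurable p) (hpb : ∀ y, |p y| ≤ 1)
    (hq : Measurable q) (hqb : ∀ y, |q y| ≤ 1)
    (hP : Measurable P) (hPb : ∀ y, |P y| ≤ 1)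
    (hQ : Measurable Q) (hQb : ∀ y, |Q y| ≤ 1) :
    ∫ x in unitBox d, (p x - q x) * conv K (fun y => P y - Q y) x
      = (∫ x in unitBox d, p x * conv K P x) - (∫ x in unitBox d, p x * conv K Q x)
        - (∫ x in unitBox d, q x * conv K P x) + (∫ x in unitBox d, q x * conv K Q x) := by
  have i1 := integrableOn_mul_conv hKi hKm hp hpb hP hPb
  have i2 := integrableOn_mul_conv hKi hKm hp hpb hQ hQb
  have i3 := integrableOn_mul_conv hKi hKm hq hqb hP hPb
  have i4 := integrableOn_mul_conv hKi hKm hq hqb hQ hQb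
  have hpt : ∀ x, (p x - q x) * conv K (fun y => P y - Q y) x
      = (p x * conv K P x - p x * conv K Q x)
        - (q x * conv K P x - q x * conv K Q x) := by
    intro x; rw [conv_sub hKi hP hQ hPb hQb]; ring
  calc ∫ x in unitBox d, (p x - q x) * conv K (fun y => P y - Q y) x
      = ∫ x in unitBox d, ((p x * conv K P x - p x * conv K Q x)
          - (q x * conv K P x - q x * conv K Q x)) :=
        integral_congr_ae (ae_of_all _ fun x => hpt x)
    _ = (∫ x in unitBox d, (p x * conv K P x - p x * conv K Q x))
          - ∫ x in unitBox d, (q x * conv K P x - q x * conv K Q x) :=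
        integral_sub (i1.sub i2) (i3.sub i4)
    _ = _ := by
        rw [integral_sub i1 i2, integral_sub i3 i4]
        ring

end Main

/-- the thresholding step minimizes `u ↦ (1/2h)·d_h(u,χ)² + E_h(u)` over `ℳ`. -/
theorem stmt_6 (d N : ℕ) (γ β h : ℝ) (hβ0 : 0 < β) (hβγ : β < γ) (hh : 0 < h)
    (a b : Fin N → Fin N → ℝ)
    (hasymm : ∀ i j, a i j = a j i) (hbsymm : ∀ i j, b i j = b j i)
    (hadiag : ∀ i, a i i = 0) (hbdiag : ∀ i, b i i = 0)
    (χ : (Fin d → ℝ) → Fin N → ℝ) (hχ : memA χ)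
    (ψ : Fin N → (Fin d → ℝ) → ℝ)
    (hψ : ∀ i x, ψ i x = ∑ j ∈ Finset.univ.erase i,
      conv (Khij d γ β (a i j) (b i j) h) (fun y => χ y j) x)
    (χ' : (Fin d → ℝ) → Fin N → ℝ) (hχ' : memA χ')
    (hthresh : ∀ᵐ x ∂(volume : Measure (Fin d → ℝ)),
      ∀ i, χ' x i = 1 → ∀ j, ψ i x ≤ ψ j x) :
    ∀ u : (Fin d → ℝ) → Fin N → ℝ, memM u →
      1 / (2 * h) * dsq γ β a b h χ' χ + Eh γ β a b h χ'
        ≤ 1 / (2 * h) * dsq γ β a b h u χ + Eh γ β a b h u := by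
  intro u hu
  have hγ0 : 0 < γ := hβ0.trans hβγ
  have hKi : ∀ i j, Integrable (Khij d γ β (a i j) (b i j) h) :=
    fun i j => Khij_integrable hγ0 hβ0 hh _ _
  have hKm : ∀ i j, Measurable (Khij d γ β (a i j) (b i j) h) :=
    fun i j => Khij_measurable _ _ _ _ _
  have hKe : ∀ i j z, Khij d γ β (a i j) (b i j) h (-z) = Khij d γ β (a i j) (b i j) h z :=
    fun i j z => Khij_even _ _ _ _ _ _
  -- componentwise facts
  have comp : ∀ (v : (Fin d → ℝ) → Fin N → ℝ), memM v → ∀ i,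
      Measurable (fun y => v y i) ∧ (∀ y, |v y i| ≤ 1) ∧ ZPeriodic (fun y => v y i) := by
    intro v hv i
    refine ⟨(measurable_pi_apply i).comp hv.1, fun y => ?_, fun x k => congrFun (hv.2.1 x k) i⟩
    have h01 := hv.2.2.1 y i
    rw [abs_le]
    exact ⟨by linarith [h01.1], h01.2⟩
  have hχM := hχ.1
  have hχ'M := hχ'.1
  have cχ := comp χ hχM
  have cχ' := comp χ' hχ'M
  have cu := comp u hu
  -- expansion of the quadratic part
  have key1 : ∀ (v : (Fin d → ℝ) → Fin N → ℝ), memM v →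
      (∑ i, ∑ j, ∫ x in unitBox d,
          (v x i - χ x i) * conv (Khij d γ β (a i j) (b i j) h) (fun y => v y j - χ y j) x)
        = Jfun γ β a b h v v - Jfun γ β a b h v χ - Jfun γ β a b h χ v
          + Jfun γ β a b h χ χ := by
    intro v hv
    have cv := comp v hv
    have : ∀ i j, (∫ x in unitBox d,
          (v x i - χ x i) * conv (Khij d γ β (a i j) (b i j) h) (fun y => v y j - χ y j) x)
        = (∫ x in unitBox d, v x i * conv (Khij d γ β (a i j) (b i j) h) (fun y => v y j) x)
          - (∫ x in unitBox d, v x i * conv (Khij d γ β (a i j) (b i j) h) (fun y => χ y j) x)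
          - (∫ x in unitBox d, χ x i * conv (Khij d γ β (a i j) (b i j) h) (fun y => v y j) x)
          + (∫ x in unitBox d, χ x i * conv (Khij d γ β (a i j) (b i j) h) (fun y => χ y j) x) :=
      fun i j => expand4 (hKi i j) (hKm i j) (cv i).1 (cv i).2.1 (cχ i).1 (cχ i).2.1
        (cv j).1 (cv j).2.1 (cχ j).1 (cχ j).2.1
    simp only [this, Jfun, Finset.sum_add_distrib, Finset.sum_sub_distrib]
  -- symmetry of the bilinear form
  have key2 : ∀ (v : (Fin d → ℝ) → Fin N → ℝ), memM v →
      Jfun γ β a b h χ v = Jfun γ β a b h v χ := by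
    intro v hv
    have cv := comp v hv
    unfold Jfun
    rw [Finset.sum_comm]
    refine Finset.sum_congr rfl fun i _ => Finset.sum_congr rfl fun j _ => ?_
    rw [hasymm j i, hbsymm j i]
    exact conv_symm (hKi i j) (hKm i j) (hKe i j)
      (cχ j).1 (cχ j).2.2 (cχ j).2.1 (cv i).1 (cv i).2.2 (cv i).2.1
  -- the sum of convolutions equals ψ
  have hsum_conv : ∀ i x,
      (∑ j, conv (Khij d γ β (a i j) (b i j) h) (fun y => χ y j) x) = ψ i x := by
    intro i x
    rw [hψ, ← Finset.add_sum_erase _ _ (Finset.mem_univ i)]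
    have hzero : conv (Khij d γ β (a i i) (b i i) h) (fun y => χ y i) x = 0 := by
      simp [conv, Khij, hadiag i, hbdiag i]
    rw [hzero, zero_add]
  -- linear term as integral against ψ
  have key3 : ∀ (v : (Fin d → ℝ) → Fin N → ℝ), memM v →
      Jfun γ β a b h v χ = ∫ x in unitBox d, ∑ i, v x i * ψ i x := by
    intro v hv
    have cv := comp v hv
    have hterm : ∀ i, IntegrableOn
        (fun x => ∑ j, v x i * conv (Khij d γ β (a i j) (b i j) h) (fun y => χ y j) x)
        (unitBox d) :=
      fun i => integrable_finset_sum _ fun j _ =>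
        integrableOn_mul_conv (hKi i j) (hKm i j) (cv i).1 (cv i).2.1 (cχ j).1 (cχ j).2.1
    have hpsi : ∀ i, (fun x => v x i * ψ i x)
        = fun x => ∑ j, v x i * conv (Khij d γ β (a i j) (b i j) h) (fun y => χ y j) x := by
      intro i; funext x; rw [← hsum_conv i x, Finset.mul_sum]
    calc Jfun γ β a b h v χ
        = ∑ i, ∫ x in unitBox d,
            ∑ j, v x i * conv (Khij d γ β (a i j) (b i j) h) (fun y => χ y j) x := by
          unfold Jfun
          exact Finset.sum_congr rfl fun i _ =>
            (integral_finset_sum _ fun j _ =>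
              integrableOn_mul_conv (hKi i j) (hKm i j) (cv i).1 (cv i).2.1
                (cχ j).1 (cχ j).2.1).symm
      _ = ∑ i, ∫ x in unitBox d, v x i * ψ i x := by
          exact Finset.sum_congr rfl fun i _ => by rw [hpsi i]
      _ = ∫ x in unitBox d, ∑ i, v x i * ψ i x := by
          refine (integral_finset_sum _ fun i _ => ?_).symm
          rw [hpsi i]; exact hterm i
  -- integrability of the ψ-weighted sums
  have hintv : ∀ (v : (Fin d → ℝ) → Fin N → ℝ), memM v →
      IntegrableOn (fun x => ∑ i, v x i * ψ i x) (unitBox d) := by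
    intro v hv
    have cv := comp v hv
    refine integrable_finset_sum _ fun i _ => ?_
    have : (fun x => v x i * ψ i x)
        = fun x => ∑ j, v x i * conv (Khij d γ β (a i j) (b i j) h) (fun y => χ y j) x := by
      funext x; rw [← hsum_conv i x, Finset.mul_sum]
    rw [this]
    exact integrable_finset_sum _ fun j _ =>
      integrableOn_mul_conv (hKi i j) (hKm i j) (cv i).1 (cv i).2.1 (cχ j).1 (cχ j).2.1
  -- pointwise inequality
  have hpoint : ∀ x, (∑ i, u x i = 1) → (∑ i, χ' x i = 1) →
      (∀ i, χ' x i = 1 → ∀ j, ψ i x ≤ ψ j x) →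
      ∑ i, χ' x i * ψ i x ≤ ∑ i, u x i * ψ i x := by
    intro x hu1 hc1 hth
    obtain ⟨i0, hi0⟩ : ∃ i0, χ' x i0 = 1 := by
      by_contra hc
      push_neg at hc
      have hz : ∀ i ∈ Finset.univ, χ' x i = 0 :=
        fun i _ => (hχ'.2 x i).resolve_right (hc i)
      rw [Finset.sum_congr rfl hz] at hc1
      simp at hc1
    have hmin := hth i0 hi0
    have hsum0 : ∑ j ∈ Finset.univ.erase i0, χ' x j = 0 := by
      have hadd := Finset.add_sum_erase Finset.univ (fun j => χ' x j) (Finset.mem_univ i0)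
      simp only [hi0] at hadd
      rw [hc1] at hadd
      linarith
    have hzero : ∀ i ∈ Finset.univ.erase i0, χ' x i * ψ i x = 0 := by
      intro i hi
      have hnn : ∀ j ∈ Finset.univ.erase i0, 0 ≤ χ' x j :=
        fun j _ => (hχ'M.2.2.1 x j).1
      have := (Finset.sum_eq_zero_iff_of_nonneg hnn).1 hsum0 i hi
      rw [this, zero_mul]
    have hL : ∑ i, χ' x i * ψ i x = ψ i0 x := by
      rw [← Finset.add_sum_erase _ _ (Finset.mem_univ i0), Finset.sum_eq_zero hzero,
        hi0, one_mul, add_zero]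
    rw [hL]
    calc ψ i0 x = (∑ i, u x i) * ψ i0 x := by rw [hu1, one_mul]
      _ = ∑ i, u x i * ψ i0 x := by rw [Finset.sum_mul]
      _ ≤ ∑ i, u x i * ψ i x :=
        Finset.sum_le_sum fun i _ => mul_le_mul_of_nonneg_left (hmin i) ((hu.2.2.1 x i).1)
  -- the comparison of linear terms
  have hcomp : Jfun γ β a b h χ' χ ≤ Jfun γ β a b h u χ := by
    rw [key3 χ' hχ'M, key3 u hu]
    refine integral_mono_ae (hintv χ' hχ'M) (hintv u hu) ?_
    filter_upwards [ae_restrict_of_ae hu.2.2.2, ae_restrict_of_ae hχ'M.2.2.2,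
      ae_restrict_of_ae hthresh] with x h1 h2 h3
    exact hpoint x h1 h2 h3
  -- algebraic form of the functional
  have hsq : (0:ℝ) < Real.sqrt h := Real.sqrt_pos.2 hh
  have hhs : Real.sqrt h * Real.sqrt h = h := Real.mul_self_sqrt hh.le
  have hform : ∀ (v : (Fin d → ℝ) → Fin N → ℝ), memM v →
      1 / (2 * h) * dsq γ β a b h v χ + Eh γ β a b h v
        = (Real.sqrt h)⁻¹ * (Jfun γ β a b h v χ + Jfun γ β a b h χ v
            - Jfun γ β a b h χ χ) := by
    intro v hv
    have hE : Eh γ β a b h v = (Real.sqrt h)⁻¹ * Jfun γ β a b h v v := rfl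
    rw [dsq, key1 v hv, hE]
    have hne : Real.sqrt h ≠ 0 := ne_of_gt hsq
    have hc : 1 / (2*h) * (-2*Real.sqrt h) = -(Real.sqrt h)⁻¹ := by
      field_simp
      rw [Real.sq_sqrt hh.le]
    calc 1 / (2*h) * (-2*Real.sqrt h * (Jfun γ β a b h v v - Jfun γ β a b h v χ
            - Jfun γ β a b h χ v + Jfun γ β a b h χ χ))
          + (Real.sqrt h)⁻¹ * Jfun γ β a b h v v
        = (1 / (2*h) * (-2*Real.sqrt h)) * (Jfun γ β a b h v v - Jfun γ β a b h v χ
            - Jfun γ β a b h χ v + Jfun γ β a b h χ χ)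
          + (Real.sqrt h)⁻¹ * Jfun γ β a b h v v := by ring
      _ = -(Real.sqrt h)⁻¹ * (Jfun γ β a b h v v - Jfun γ β a b h v χ
            - Jfun γ β a b h χ v + Jfun γ β a b h χ χ)
          + (Real.sqrt h)⁻¹ * Jfun γ β a b h v v := by rw [hc]
      _ = (Real.sqrt h)⁻¹ * (Jfun γ β a b h v χ + Jfun γ β a b h χ v
            - Jfun γ β a b h χ χ) := by ring
  rw [hform χ' hχ'M, hform u hu]
  have hmono : Jfun γ β a b h χ' χ + Jfun γ β a b h χ χ' - Jfun γ β a b h χ χ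
      ≤ Jfun γ β a b h u χ + Jfun γ β a b h χ u - Jfun γ β a b h χ χ := by
    rw [key2 χ' hχ'M, key2 u hu]
    linarith
  exact mul_le_mul_of_nonneg_left hmono (inv_nonneg.2 hsq.le)
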